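/- In an associative algebra over a field, suppose σ satisfies the cubic relation (σ − q)(σ + q^{-1})(σ − ν) = 0 with q − q^{-1} ≠ 0 and ν ≠ 0, and define κ = (q − σ)(σ + q^{-1})/(ν(q − q^{-1})). Then κ^2 = μ κ where μ = 1 + (ν^{-1} − ν)/(q − q^{-1}). -/

import Mathlib

/-- If `σ` satisfies the BMW cubic relation `(σ - q)(σ + q⁻¹)(σ - ν) = 0` with
`q - q⁻¹ ≠ 0` and `ν ≠ 0`, and `κ = (q - σ)(σ + q⁻¹)/(ν(q - q⁻¹))`, then
`κ² = μ κ` where `μ = 1 + (ν⁻¹ - ν)/(q - q⁻¹)`. -/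
theorem bmw_kappa_sq
    (F : Type*) [Field F] (A : Type*) [Ring A] [Algebra F A]
    (q ν : F) (hq : q ≠ 0) (hq2 : q ^ 2 ≠ 1) (hν : ν ≠ 0)
    (σ : A)
    (hcubic : (σ - q • (1 : A)) * (σ + q⁻¹ • (1 : A)) * (σ - ν • (1 : A)) = 0)
    (κ : A)
    (hκ : κ = (ν * (q - q⁻¹))⁻¹ • ((q • (1 : A) - σ) * (σ + q⁻¹ • (1 : A)))) :
    κ * κ = (1 + (ν⁻¹ - ν) / (q - q⁻¹)) • κ := by
  have hqq : q - q⁻¹ ≠ 0 := by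
    intro h
    apply hq2
    have hq' : q = q⁻¹ := sub_eq_zero.mp h
    rw [sq]
    nth_rewrite 2 [hq']
    exact mul_inv_cancel₀ hq
  set P : A := (q • (1 : A) - σ) * (σ + q⁻¹ • (1 : A)) with hP
  have hneg : P = -((σ - q • (1 : A)) * (σ + q⁻¹ • (1 : A))) := by
    rw [hP, neg_mul_eq_neg_mul, neg_sub]
  have hPσ : P * σ = ν • P := by
    have h0 : P * (σ - ν • (1 : A)) = 0 := by
      rw [hneg, neg_mul, hcubic, neg_zero]
    rwa [mul_sub, mul_smul_comm, mul_one, sub_eq_zero] at h0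
  have e2 : P * (σ + q⁻¹ • (1 : A)) = (ν + q⁻¹) • P := by
    rw [mul_add, mul_smul_comm, mul_one, hPσ, ← add_smul]
  have e1 : P * (q • (1 : A) - σ) = (q - ν) • P := by
    rw [mul_sub, mul_smul_comm, mul_one, hPσ, ← sub_smul]
  have hPP : P * P = ((q - ν) * (ν + q⁻¹)) • P := by
    calc P * P = P * ((q • (1 : A) - σ) * (σ + q⁻¹ • (1 : A))) := by rw [← hP]
      _ = (P * (q • (1 : A) - σ)) * (σ + q⁻¹ • (1 : A)) := (mul_assoc _ _ _).symm
      _ = ((q - ν) • P) * (σ + q⁻¹ • (1 : A)) := by rw [e1]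
      _ = (q - ν) • (P * (σ + q⁻¹ • (1 : A))) := smul_mul_assoc _ _ _
      _ = (q - ν) • ((ν + q⁻¹) • P) := by rw [e2]
      _ = ((q - ν) * (ν + q⁻¹)) • P := smul_smul _ _ _
  rw [hκ, smul_mul_assoc, mul_smul_comm, hPP, smul_smul, smul_smul, smul_smul]
  congr 1
  have e : q - q⁻¹ = (q ^ 2 - 1) / q := by field_simp
  have h1 : q ^ 2 - 1 ≠ 0 := by
    intro h; apply hqq; rw [e, h, zero_div]
  rw [e]
  field_simp
  ring
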